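/- arXiv:1308.1346 — 2 statements merged into one kernel-verified Lean document; each statement's English description precedes it below -/
import Mathlib

section
/- Let S be an Artinian local commutative ring with residue field F₂, with reduction π_S : S → F₂ (a surjective ring homomorphism whose kernel is the maximal ideal m_S). Let ρ₁, ρ₂ : SL_2(F₂) → GL_2(S) be two group homomorphisms such that π_S(ρ_i(M)(a,b)) = M(a,b) for i = 1,2, all M ∈ SL_2(F₂) and all indices a,b. Then there exists X ∈ GL_2(S) with X ≡ I mod m_S such that ρ₂(M) = X · ρ₁(M) · X⁻¹ for all M ∈ SL_2(F₂). -/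
open Matrix IsLocalRing

lemma sl2_F2_avg_key : (∑ g : SpecialLinearGroup (Fin 2) (ZMod 2),
    (g : Matrix (Fin 2) (Fin 2) (ZMod 2)) * Matrix.single 0 0 1 *
      ((g⁻¹ : SpecialLinearGroup (Fin 2) (ZMod 2)) : Matrix (Fin 2) (Fin 2) (ZMod 2))) = 1 := by
  decide

/-- Any two lifts of the natural representation of `SL_2(F₂)` to an
Artinian local ring `S` with residue field `F₂` are strictly equivalent, i.e. conjugate
by a matrix `≡ I mod m_S`. -/
theorem sl2_F2_lifts_strictly_equivalent
    {S : Type*} [CommRing S] [IsLocalRing S] [IsArtinianRing S]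
    (πS : S →+* ZMod 2) (hπS : Function.Surjective πS)
    (hkerS : RingHom.ker πS = maximalIdeal S)
    (ρ₁ ρ₂ : SpecialLinearGroup (Fin 2) (ZMod 2) →* GL (Fin 2) S)
    (hlift₁ : ∀ (M : SpecialLinearGroup (Fin 2) (ZMod 2)) (a b : Fin 2),
      πS ((ρ₁ M : Matrix (Fin 2) (Fin 2) S) a b) = (M : Matrix (Fin 2) (Fin 2) (ZMod 2)) a b)
    (hlift₂ : ∀ (M : SpecialLinearGroup (Fin 2) (ZMod 2)) (a b : Fin 2),
      πS ((ρ₂ M : Matrix (Fin 2) (Fin 2) S) a b) = (M : Matrix (Fin 2) (Fin 2) (ZMod 2)) a b) :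
    ∃ X : GL (Fin 2) S,
      (∀ a b, (X : Matrix (Fin 2) (Fin 2) S) a b - (1 : Matrix (Fin 2) (Fin 2) S) a b ∈
        maximalIdeal S) ∧
      ∀ M : SpecialLinearGroup (Fin 2) (ZMod 2), ρ₂ M = X * ρ₁ M * X⁻¹ := by
  classical
  set G := SpecialLinearGroup (Fin 2) (ZMod 2)
  set E : Matrix (Fin 2) (Fin 2) S := Matrix.single 0 0 1 with hE
  set Xm : Matrix (Fin 2) (Fin 2) S :=
    ∑ g : G, (ρ₂ g : Matrix (Fin 2) (Fin 2) S) * E * (ρ₁ g⁻¹ : Matrix (Fin 2) (Fin 2) S)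
    with hXm
  -- intertwining at matrix level
  have hint : ∀ h : G, (ρ₂ h : Matrix (Fin 2) (Fin 2) S) * Xm
      = Xm * (ρ₁ h : Matrix (Fin 2) (Fin 2) S) := by
    intro h
    rw [hXm, Finset.mul_sum, Finset.sum_mul]
    refine Fintype.sum_equiv (Equiv.mulLeft h) _ _ ?_
    intro g
    simp only [Equiv.coe_mulLeft]
    have e1 : ((ρ₂ (h * g) : GL (Fin 2) S) : Matrix (Fin 2) (Fin 2) S)
        = (ρ₂ h : Matrix (Fin 2) (Fin 2) S) * (ρ₂ g : Matrix (Fin 2) (Fin 2) S) := by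
      rw [_root_.map_mul]; rfl
    have e2 : ((ρ₁ ((h * g)⁻¹) : GL (Fin 2) S) : Matrix (Fin 2) (Fin 2) S)
        * (ρ₁ h : Matrix (Fin 2) (Fin 2) S)
        = (ρ₁ g⁻¹ : Matrix (Fin 2) (Fin 2) S) := by
      have : ((ρ₁ ((h * g)⁻¹) * ρ₁ h : GL (Fin 2) S) : Matrix (Fin 2) (Fin 2) S)
          = (ρ₁ g⁻¹ : Matrix (Fin 2) (Fin 2) S) := by
        have hgg : (h * g)⁻¹ * h = g⁻¹ := by rw [_root_.mul_inv_rev, mul_assoc, _root_.inv_mul_cancel, mul_one]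
        rw [← _root_.map_mul, hgg]
      simpa using this
    rw [e1, ← e2]
    simp only [mul_assoc]
  -- reduction mod m_S of Xm is 1
  have hred : Xm.map πS = 1 := by
    have hmap : Xm.map πS = ∑ g : G,
        ((g : Matrix (Fin 2) (Fin 2) (ZMod 2)) * Matrix.single 0 0 1 *
          ((g⁻¹ : G) : Matrix (Fin 2) (Fin 2) (ZMod 2))) := by
      have : πS.mapMatrix Xm = ∑ g : G,
          ((g : Matrix (Fin 2) (Fin 2) (ZMod 2)) * Matrix.single 0 0 1 *
            ((g⁻¹ : G) : Matrix (Fin 2) (Fin 2) (ZMod 2))) := by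
        rw [hXm, map_sum]
        refine Finset.sum_congr rfl ?_
        intro g _
        rw [_root_.map_mul, _root_.map_mul]
        congr 1
        · congr 1
          · ext a b
            simpa using hlift₂ g a b
          · ext a b
            simp only [RingHom.mapMatrix_apply, Matrix.map_apply, hE,
              Matrix.single]
            simp [Matrix.of_apply, apply_ite]
        · ext a b
          exact hlift₁ g⁻¹ a b
      simpa [RingHom.mapMatrix_apply] using this
    rw [hmap]
    exact sl2_F2_avg_key
  -- Xm is invertible
  have hdet : πS Xm.det = 1 := by
    have := RingHom.map_det πS Xm
    rw [this, RingHom.mapMatrix_apply, hred, Matrix.det_one]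
  have hdetu : IsUnit Xm.det := by
    by_contra hcon
    have : Xm.det ∈ maximalIdeal S := hcon
    rw [← hkerS, RingHom.mem_ker] at this
    rw [this] at hdet
    exact zero_ne_one hdet
  have hXu : IsUnit Xm := (Matrix.isUnit_iff_isUnit_det Xm).mpr hdetu
  refine ⟨hXu.unit, ?_, ?_⟩
  · intro a b
    rw [← hkerS, RingHom.mem_ker, map_sub]
    have h1 : πS ((hXu.unit : Matrix (Fin 2) (Fin 2) S) a b)
        = (1 : Matrix (Fin 2) (Fin 2) (ZMod 2)) a b := by
      rw [hXu.unit_spec]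
      have := congrFun (congrFun hred a) b
      simpa [Matrix.map_apply] using this
    rw [h1]
    rcases eq_or_ne a b with h | h <;> simp [Matrix.one_apply, h]
  · intro M
    have key : ρ₂ M * hXu.unit = hXu.unit * ρ₁ M :=
      Units.ext (by simpa [hXu.unit_spec] using hint M)
    rw [eq_mul_inv_iff_mul_eq]
    exact key
end

section
/- Let k be a finite field with q elements, let R be a complete Noetherian local commutative ring with residue field k (reduction π_R : R → k), and let S be a complete Noetherian local commutative ring with residue field k (reduction π_S : S → k, maximal ideal m_S). Let ρ : SL_2(R) → GL_2(S) be a group homomorphism with π_S(ρ(A)(i,j)) = π_R(A(i,j)) for all A ∈ SL_2(R) and all i,j. Then there exists Y ∈ GL_2(S) with Y ≡ I mod m_S such that for every a ∈ R with a^{q−1} = 1 there exists b ∈ S with b^{q−1} = 1 and π_S(b) = π_R(a) such that Y · ρ(diag(a, a⁻¹)) · Y⁻¹ = diag(b, b⁻¹). -/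
open Matrix IsLocalRing

lemma lemA {k S : Type*} [Field k] [CommRing S] [IsLocalRing S]
    (πS : S →+* k) (hker : RingHom.ker πS = maximalIdeal S)
    {x : S} (hx : πS x = 1) {m : ℕ} (hm : (m : k) ≠ 0) (hxm : x ^ m = 1) : x = 1 := by
  have hU : IsUnit (∑ i ∈ Finset.range m, x ^ i) := by
    rw [← IsLocalRing.notMem_maximalIdeal, ← hker, RingHom.mem_ker]
    simp [map_sum, map_pow, hx, hm]
  have h0 : (∑ i ∈ Finset.range m, x ^ i) * (x - 1) = 0 := by
    rw [geom_sum_mul, hxm, sub_self]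
  exact sub_eq_zero.mp ((hU.mul_right_eq_zero).mp h0)

lemma lemB {k S : Type*} [Field k] [CommRing S] [IsLocalRing S]
    (πS : S →+* k) (hker : RingHom.ker πS = maximalIdeal S)
    {X : Matrix (Fin 2) (Fin 2) S} (hX : X.map πS = 1)
    {m : ℕ} (hm : (m : k) ≠ 0) (hXm : X ^ m = 1) : X = 1 := by
  set U : Matrix (Fin 2) (Fin 2) S := ∑ i ∈ Finset.range m, X ^ i with hU
  have hmapU : U.map πS = (m : Matrix (Fin 2) (Fin 2) k) := by
    have : (πS.mapMatrix : Matrix (Fin 2) (Fin 2) S →+* Matrix (Fin 2) (Fin 2) k) U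
        = (m : Matrix (Fin 2) (Fin 2) k) := by
      rw [hU, map_sum]
      have : ∀ i ∈ Finset.range m, πS.mapMatrix (X ^ i) = 1 := by
        intro i _
        rw [map_pow]
        show (X.map πS) ^ i = 1
        rw [hX, one_pow]
      rw [Finset.sum_congr rfl this]
      simp
    exact this
  have hUdet : IsUnit U.det := by
    rw [← IsLocalRing.notMem_maximalIdeal, ← hker, RingHom.mem_ker, RingHom.map_det]
    rw [RingHom.mapMatrix_apply, hmapU]
    have : ((m : Matrix (Fin 2) (Fin 2) k)).det = (m : k) ^ 2 := by
      rw [show (m : Matrix (Fin 2) (Fin 2) k) = (m : k) • 1 by simp [Matrix.smul_one_eq_diagonal]; rfl,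
        Matrix.det_smul, Fintype.card_fin]
      simp
    rw [this]
    exact pow_ne_zero 2 hm
  have hUunit : IsUnit U := (Matrix.isUnit_iff_isUnit_det U).mpr hUdet
  have h0 : U * (X - 1) = 0 := by
    rw [hU, geom_sum_mul, hXm, sub_self]
  obtain ⟨u, hu⟩ := hUunit
  have : X - 1 = 0 := by
    have := congrArg (fun M => (↑u⁻¹ : Matrix (Fin 2) (Fin 2) S) * M) h0
    simpa [← hu, ← mul_assoc] using this
  exact sub_eq_zero.mp this

lemma conj_pow_units {M : Type*} [Monoid M] (u : Mˣ) (x d : M)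
    (h : ↑u * x * ↑u⁻¹ = d) (j : ℕ) : ↑u * x ^ j * ↑u⁻¹ = d ^ j := by
  induction j with
  | zero => simp
  | succ n ih =>
    have : (↑u : M) * x ^ (n + 1) * ↑u⁻¹ = (↑u * x ^ n * ↑u⁻¹) * (↑u * x * ↑u⁻¹) := by
      have huu : (↑u⁻¹ : M) * ↑u = 1 := u.inv_mul
      calc (↑u : M) * x ^ (n + 1) * ↑u⁻¹ = ↑u * x ^ n * (↑u⁻¹ * ↑u) * x * ↑u⁻¹ := by
            rw [huu, mul_one, pow_succ]; simp only [mul_assoc]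
        _ = (↑u * x ^ n * ↑u⁻¹) * (↑u * x * ↑u⁻¹) := by
            simp only [mul_assoc]
    rw [this, ih, h, pow_succ]

lemma lemC {k S : Type*} [Field k] [CommRing S] [IsLocalRing S]
    [IsAdicComplete (maximalIdeal S) S]
    (πS : S →+* k) (hπS : Function.Surjective πS) (hker : RingHom.ker πS = maximalIdeal S)
    {X : Matrix (Fin 2) (Fin 2) S} {α : k} (hα : α ≠ 0)
    (hX : X.map πS = Matrix.diagonal ![α, α⁻¹])
    {m : ℕ} (hm : (m : k) ≠ 0) (hXm : X ^ m = 1) :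
    ∃ (Y : (Matrix (Fin 2) (Fin 2) S)ˣ) (b : Sˣ),
      ((Y : Matrix (Fin 2) (Fin 2) S)).map πS = 1 ∧ ((b : S)) ^ m = 1 ∧ πS (b : S) = α ∧
      (Y : Matrix (Fin 2) (Fin 2) S) * X *
          ((Y⁻¹ : (Matrix (Fin 2) (Fin 2) S)ˣ) : Matrix (Fin 2) (Fin 2) S)
        = Matrix.diagonal ![(b : S), ((b⁻¹ : Sˣ) : S)] := by
  have hXe : ∀ i j, πS (X i j) = (Matrix.diagonal ![α, α⁻¹]) i j := by
    intro i j; rw [← hX]; rfl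
  have hX00 : πS (X 0 0) = α := by simpa using hXe 0 0
  have hX01 : πS (X 0 1) = 0 := by simpa using hXe 0 1
  have hX10 : πS (X 1 0) = 0 := by simpa using hXe 1 0
  have hX11 : πS (X 1 1) = α⁻¹ := by simpa using hXe 1 1
  by_cases hα1 : α = 1
  · -- X ≡ 1, so X = 1
    subst hα1
    have hXone : X.map πS = 1 := by
      rw [hX]; ext i j; fin_cases i <;> fin_cases j <;> simp [Matrix.diagonal, Matrix.one_apply]
    have hX1 : X = 1 := lemB πS hker hXone hm hXm
    refine ⟨1, 1, ?_, ?_, ?_, ?_⟩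
    · ext i j; simp [Matrix.map_apply, Matrix.one_apply, apply_ite πS]
    · simp
    · simp
    · subst hX1
      ext i j; fin_cases i <;> fin_cases j <;> simp [Matrix.diagonal, Matrix.one_apply]
  · by_cases hαm1 : α = -1
    · -- X ≡ -1, so X = -1
      subst hαm1
      have h2 : (2 : k) ≠ 0 := by
        intro h; apply hα1; linear_combination -h
      have hXone : (-X).map πS = 1 := by
        ext i j
        have := hXe i j
        fin_cases i <;> fin_cases j <;>
          simp [Matrix.map_apply, Matrix.diagonal, Matrix.one_apply] <;>
          simp_all [Matrix.diagonal, inv_neg_one]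
      have h2m : ((2 * m : ℕ) : k) ≠ 0 := by
        push_cast; exact mul_ne_zero h2 hm
      have hXm2 : (-X) ^ (2 * m) = 1 := by
        rw [pow_mul, neg_sq, ← pow_mul, mul_comm 2 m, pow_mul, hXm, one_pow]
      have hXneg : X = -1 := by
        have := lemB πS hker hXone h2m hXm2
        linear_combination (norm := abel) -this
      refine ⟨1, -1, ?_, ?_, ?_, ?_⟩
      · ext i j; simp [Matrix.map_apply, Matrix.one_apply, apply_ite πS]
      · -- (-1)^m = 1
        have h1 : ((-1 : S) • (1 : Matrix (Fin 2) (Fin 2) S)) ^ m = 1 := by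
          rw [show ((-1 : S) • (1 : Matrix (Fin 2) (Fin 2) S)) = -1 by simp, ← hXneg, hXm]
        rw [smul_pow, one_pow] at h1
        have h2 := congrArg (fun M : Matrix (Fin 2) (Fin 2) S => M 0 0) h1
        simpa using h2
      · simp
      · rw [hXneg]
        ext i j
        fin_cases i <;> fin_cases j <;>
          simp [Matrix.diagonal, Matrix.one_apply]
    · -- main case : α² ≠ 1
      have hαα : α - α⁻¹ ≠ 0 := by
        intro h
        have h1 : α * α = 1 := by
          have h2 : α * (α - α⁻¹) = 0 := by rw [h, mul_zero]
          rw [mul_sub, mul_inv_cancel₀ hα] at h2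
          linear_combination h2
        rcases mul_self_eq_one_iff.mp h1 with h' | h'
        · exact hα1 h'
        · exact hαm1 h'
      have hdet : X.det = 1 := by
        refine lemA πS hker ?_ hm ?_
        · rw [RingHom.map_det, RingHom.mapMatrix_apply, hX, Matrix.det_diagonal,
            Fin.prod_univ_two]
          simp [mul_inv_cancel₀ hα]
        · rw [← Matrix.det_pow, hXm, Matrix.det_one]
      have hdet2 : X 0 0 * X 1 1 - X 0 1 * X 1 0 = 1 := by
        rw [← Matrix.det_fin_two]; exact hdet
      obtain ⟨s₀, hs₀⟩ := hπS α
      -- Hensel's lemma to find eigenvalue b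
      set t : S := X 0 0 + X 1 1 with ht
      have hπt : πS t = α + α⁻¹ := by rw [ht, map_add, hX00, hX11]
      set f : Polynomial S := Polynomial.X ^ 2 + Polynomial.C (-t) * Polynomial.X +
        Polynomial.C 1 with hf
      have hmonic : f.Monic := by
        have hfe : f = Polynomial.X ^ 2 + (Polynomial.C (-t) * Polynomial.X + Polynomial.C 1) := by
          rw [hf]; ring
        rw [hfe]
        exact Polynomial.monic_X_pow_add
          (lt_of_le_of_lt Polynomial.degree_linear_le (by norm_num))
      have heval : ∀ x : S, f.eval x = x ^ 2 - t * x + 1 := by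
        intro x; simp [hf]; ring
      have hderiv : ∀ x : S, f.derivative.eval x = 2 * x - t := by
        intro x; simp [hf]; ring
      obtain ⟨b, hroot, hbs⟩ := HenselianRing.is_henselian (I := maximalIdeal S) f hmonic s₀
        (by
          rw [← hker, RingHom.mem_ker, heval]
          have : πS (s₀ ^ 2 - t * s₀ + 1) = α ^ 2 - (α + α⁻¹) * α + 1 := by
            simp [map_sub, map_add, _root_.map_mul, map_pow, hs₀, hπt]
          rw [this]; field_simp; ring)
        (by
          have hu : IsUnit (f.derivative.eval s₀) := by
            rw [← IsLocalRing.notMem_maximalIdeal, ← hker, RingHom.mem_ker, hderiv]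
            have : πS (2 * s₀ - t) = α - α⁻¹ := by
              rw [map_sub, _root_.map_mul, hs₀, hπt, map_ofNat]; ring
            rw [this]; exact hαα
          exact hu.map (Ideal.Quotient.mk (maximalIdeal S)))
      have hπb : πS b = α := by
        have : πS (b - s₀) = 0 := by rw [← RingHom.mem_ker, hker]; exact hbs
        rw [map_sub, hs₀, sub_eq_zero] at this
        exact this
      have hb' : b * b - t * b + 1 = 0 := by
        have := hroot
        rw [Polynomial.IsRoot, heval] at this
        linear_combination this
      have hbc : b * (t - b) = 1 := by linear_combination -hb'
      set bu : Sˣ := ⟨b, t - b, hbc, by linear_combination -hb'⟩ with hbu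
      have hπc : πS (t - b) = α⁻¹ := by rw [map_sub, hπt, hπb]; ring
      have hbcu : IsUnit (b - (t - b)) := by
        rw [← IsLocalRing.notMem_maximalIdeal, ← hker, RingHom.mem_ker, map_sub, hπb, hπc]
        exact hαα
      obtain ⟨ru, hru⟩ := hbcu
      set r : S := (↑ru⁻¹ : S) with hrdef
      have hr : r * (b - (t - b)) = 1 := by rw [hrdef, ← hru]; exact ru.inv_mul
      have hπr : πS r * (α - α⁻¹) = 1 := by
        have := congrArg πS hr
        rw [_root_.map_mul, _root_.map_one, map_sub, hπb, hπc] at this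
        exact this
      set Z : Matrix (Fin 2) (Fin 2) S :=
        !![r * (b - X 1 1), -(r * X 0 1); r * X 1 0, r * (b - X 1 1)] with hZ
      set D : Matrix (Fin 2) (Fin 2) S := Matrix.diagonal ![b, t - b] with hD
      have hXZ : X * Z = Z * D := by
        ext i j
        fin_cases i <;> fin_cases j <;>
          simp [hZ, hD, Matrix.mul_apply, Fin.sum_univ_two, Matrix.diagonal, ht]
        · linear_combination (-r) * hb' - r * hdet2
        · ring
        · ring
        · linear_combination r * hb' + r * hdet2
      have hZ1 : Z.map πS = 1 := by
        ext i j
        fin_cases i <;> fin_cases j <;>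
          simp [hZ, Matrix.map_apply, Matrix.one_apply, _root_.map_mul, map_sub, map_neg,
            hπb, hX01, hX10, hX11]
        · have : πS r * (α - α⁻¹) = 1 := hπr
          linear_combination this
        · have : πS r * (α - α⁻¹) = 1 := hπr
          linear_combination this
      have hZdet : IsUnit Z.det := by
        rw [← IsLocalRing.notMem_maximalIdeal, ← hker, RingHom.mem_ker, RingHom.map_det,
          RingHom.mapMatrix_apply, hZ1, Matrix.det_one]
        exact one_ne_zero
      obtain ⟨Zu, hZu⟩ := (Matrix.isUnit_iff_isUnit_det Z).mpr hZdet
      have hconj : (↑(Zu⁻¹) : Matrix (Fin 2) (Fin 2) S) * X * (↑((Zu⁻¹)⁻¹) : Matrix (Fin 2) (Fin 2) S) = D := by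
        rw [inv_inv, hZu, mul_assoc, hXZ, ← mul_assoc, ← hZu]
        rw [show (↑(Zu⁻¹) : Matrix (Fin 2) (Fin 2) S) * ↑Zu = 1 from Zu.inv_mul, one_mul]
      refine ⟨Zu⁻¹, bu, ?_, ?_, hπb, ?_⟩
      · have h1 : πS.mapMatrix ((↑(Zu⁻¹) : Matrix (Fin 2) (Fin 2) S)) *
            πS.mapMatrix ((↑Zu : Matrix (Fin 2) (Fin 2) S)) = 1 := by
          rw [← _root_.map_mul, show (↑(Zu⁻¹) : Matrix (Fin 2) (Fin 2) S) * ↑Zu = 1 from Zu.inv_mul,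
            _root_.map_one]
        rw [hZu] at h1
        have h1' : ((↑(Zu⁻¹) : Matrix (Fin 2) (Fin 2) S)).map πS * (Z.map πS) = 1 := h1
        rw [hZ1, mul_one] at h1'
        exact h1'
      · -- b ^ m = 1
        have h2 := conj_pow_units Zu⁻¹ X D hconj m
        rw [hXm] at h2
        rw [mul_one, show (↑(Zu⁻¹) : Matrix (Fin 2) (Fin 2) S) * ↑((Zu⁻¹)⁻¹) = 1 by
          rw [inv_inv]; exact Zu.inv_mul] at h2
        have h3 : D ^ m = 1 := h2.symm
        rw [hD, Matrix.diagonal_pow] at h3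
        have h4 := congrArg (fun M : Matrix (Fin 2) (Fin 2) S => M 0 0) h3
        simpa using h4
      · rw [hconj, hD]
        rfl

/-- For a lift `ρ : SL_2(R) → GL_2(S)` of the natural representation,
there is `Y ≡ I mod m_S` such that for every Teichmüller element `a ∈ R`
(`a^{q−1} = 1`, `q = #k`), the conjugate `Y ρ(diag(a,a⁻¹)) Y⁻¹` equals `diag(b,b⁻¹)`
for the Teichmüller counterpart `b ∈ S` (`b^{q−1} = 1`, `π_S(b) = π_R(a)`). -/
theorem sl2_lift_diagonalizes_teichmuller
    {k : Type*} [Field k] [Fintype k]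
    {R : Type*} [CommRing R] [IsLocalRing R] [IsNoetherianRing R]
    [IsAdicComplete (maximalIdeal R) R]
    {S : Type*} [CommRing S] [IsLocalRing S] [IsNoetherianRing S]
    [IsAdicComplete (maximalIdeal S) S]
    (πR : R →+* k) (hπR : Function.Surjective πR)
    (hkerR : RingHom.ker πR = maximalIdeal R)
    (πS : S →+* k) (hπS : Function.Surjective πS)
    (hkerS : RingHom.ker πS = maximalIdeal S)
    (ρ : SpecialLinearGroup (Fin 2) R →* GL (Fin 2) S)
    (hlift : ∀ (A : SpecialLinearGroup (Fin 2) R) (i j : Fin 2),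
      πS ((ρ A : Matrix (Fin 2) (Fin 2) S) i j) = πR ((A : Matrix (Fin 2) (Fin 2) R) i j)) :
    ∃ Y : GL (Fin 2) S,
      (∀ i j, (Y : Matrix (Fin 2) (Fin 2) S) i j - (1 : Matrix (Fin 2) (Fin 2) S) i j ∈
        maximalIdeal S) ∧
      ∀ a : Rˣ, (a : R) ^ (Fintype.card k - 1) = 1 →
        ∀ A : SpecialLinearGroup (Fin 2) R,
          (A : Matrix (Fin 2) (Fin 2) R) = Matrix.diagonal ![(a : R), ((a⁻¹ : Rˣ) : R)] →
          ∃ b : Sˣ, (b : S) ^ (Fintype.card k - 1) = 1 ∧ πS (b : S) = πR (a : R) ∧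
            (Y : Matrix (Fin 2) (Fin 2) S) * (ρ A : Matrix (Fin 2) (Fin 2) S) *
                ((Y⁻¹ : GL (Fin 2) S) : Matrix (Fin 2) (Fin 2) S) =
              Matrix.diagonal ![(b : S), ((b⁻¹ : Sˣ) : S)] := by
  classical
  set q := Fintype.card k with hq
  have hq0 : (q : k) = 0 := FiniteField.cast_card_eq_zero k
  have hq2 : 1 < q := Fintype.one_lt_card
  have hm : ((q - 1 : ℕ) : k) ≠ 0 := by
    rw [Nat.cast_sub (by omega), hq0, Nat.cast_one, zero_sub]
    exact neg_ne_zero.mpr one_ne_zero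
  set H : Subgroup Rˣ := (powMonoidHom (q - 1) : Rˣ →* Rˣ).ker with hH
  have memH : ∀ x : Rˣ, x ∈ H ↔ x ^ (q - 1) = 1 := by
    intro x
    rw [hH, MonoidHom.mem_ker, powMonoidHom_apply]
  set φ : H →* kˣ := (Units.map (πR : R →* k)).comp H.subtype with hφ
  have hφinj : Function.Injective φ := by
    rw [injective_iff_map_eq_one]
    intro x hx
    have h1 : πR ((x : Rˣ) : R) = 1 := by
      have := congrArg Units.val hx
      simpa [hφ] using this
    have h2 : (((x : Rˣ) : R)) ^ (q - 1) = 1 := by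
      have h := congrArg Units.val ((memH _).mp x.2)
      simpa using h
    exact Subtype.ext (Units.ext (lemA πR hkerR h1 hm h2))
  haveI : Finite H := Finite.of_injective φ hφinj
  haveI : IsCyclic H :=
    isCyclic_of_surjective (MonoidHom.ofInjective hφinj).symm (MulEquiv.surjective _)
  obtain ⟨g, hg⟩ := IsCyclic.exists_generator (α := H)
  set a₀ : Rˣ := ((g : Rˣ)) with ha₀def
  have ha₀ : a₀ ^ (q - 1) = 1 := (memH _).mp g.2
  have ha₀R : ((a₀ : R)) ^ (q - 1) = 1 := by
    have := congrArg Units.val ha₀; simpa using this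
  set α : k := πR (a₀ : R) with hα
  have hmul : πR ((a₀ : R)) * πR ((a₀⁻¹ : Rˣ) : R) = 1 := by
    rw [← _root_.map_mul, Units.mul_inv, _root_.map_one]
  have hαinv : πR ((a₀⁻¹ : Rˣ) : R) = α⁻¹ := (inv_eq_of_mul_eq_one_right hmul).symm
  have hα0 : α ≠ 0 := by
    intro h
    rw [← hα] at hmul
    rw [h, zero_mul] at hmul
    exact zero_ne_one hmul
  have hdetA₀ : (Matrix.diagonal ![(a₀ : R), ((a₀⁻¹ : Rˣ) : R)]).det = 1 := by
    rw [Matrix.det_diagonal, Fin.prod_univ_two]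
    simp [Units.mul_inv]
  set A₀ : SpecialLinearGroup (Fin 2) R := ⟨_, hdetA₀⟩ with hA₀def
  have hA₀pow : ∀ n : ℕ, ((A₀ ^ n : SpecialLinearGroup (Fin 2) R) : Matrix (Fin 2) (Fin 2) R)
      = Matrix.diagonal ![((a₀ : R)) ^ n, (((a₀⁻¹ : Rˣ) : R)) ^ n] := by
    intro n
    show ((A₀ : Matrix (Fin 2) (Fin 2) R)) ^ n = _
    show (Matrix.diagonal ![(a₀ : R), ((a₀⁻¹ : Rˣ) : R)]) ^ n = _
    rw [Matrix.diagonal_pow]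
    have hv : (![(a₀ : R), ((a₀⁻¹ : Rˣ) : R)] ^ n) = ![((a₀ : R)) ^ n, (((a₀⁻¹ : Rˣ) : R)) ^ n] := by
      funext i
      fin_cases i <;> simp [Pi.pow_apply]
    rw [hv]
  have hinvpow : (((a₀⁻¹ : Rˣ) : R)) ^ (q - 1) = 1 := by
    rw [← Units.val_pow_eq_pow_val, inv_pow, ha₀, inv_one, Units.val_one]
  have hA₀q : A₀ ^ (q - 1) = 1 := by
    apply Subtype.ext
    rw [hA₀pow, ha₀R, hinvpow]
    ext i j
    fin_cases i <;> fin_cases j <;> simp [Matrix.diagonal, Matrix.one_apply]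
  set M₀ : GL (Fin 2) S := ρ A₀ with hM₀
  set X : Matrix (Fin 2) (Fin 2) S := ((M₀ : Matrix (Fin 2) (Fin 2) S)) with hXdef
  have hXq : X ^ (q - 1) = 1 := by
    have h1 : M₀ ^ (q - 1) = 1 := by rw [hM₀, ← map_pow, hA₀q, _root_.map_one]
    have h2 : ((M₀ ^ (q - 1) : GL (Fin 2) S) : Matrix (Fin 2) (Fin 2) S) = X ^ (q - 1) :=
      Units.val_pow_eq_pow_val _ _
    rw [h1] at h2
    exact h2.symm
  have hXmap : X.map πS = Matrix.diagonal ![α, α⁻¹] := by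
    ext i j
    rw [Matrix.map_apply, hXdef]
    rw [hlift A₀ i j]
    show πR ((Matrix.diagonal ![(a₀ : R), ((a₀⁻¹ : Rˣ) : R)]) i j) = _
    fin_cases i <;> fin_cases j <;> simp [Matrix.diagonal, ← hα, hαinv]
  obtain ⟨Y, b₀, hYmap, hb₀q, hb₀α, hconj⟩ := lemC πS hπS hkerS hα0 hXmap hm hXq
  refine ⟨Y, ?_, ?_⟩
  · intro i j
    rw [← hkerS, RingHom.mem_ker, map_sub]
    have h1 : πS ((Y : Matrix (Fin 2) (Fin 2) S) i j) = (1 : Matrix (Fin 2) (Fin 2) k) i j := by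
      rw [← hYmap]; rfl
    rw [h1]
    fin_cases i <;> fin_cases j <;> simp [Matrix.one_apply]
  · intro a ha A hA
    have haH : a ∈ H := by
      rw [memH]
      exact Units.ext (by simpa using ha)
    obtain ⟨n, hn⟩ := (Submonoid.mem_powers_iff _ _).mp
      (mem_powers_iff_mem_zpowers.mpr (hg ⟨a, haH⟩))
    have hval : a₀ ^ n = a := by
      have := congrArg (fun z : H => ((z : Rˣ))) hn
      simpa using this
    have hvalR : ((a₀ : R)) ^ n = (a : R) := by
      have := congrArg Units.val hval; simpa using this
    have hvalRinv : (((a₀⁻¹ : Rˣ) : R)) ^ n = ((a⁻¹ : Rˣ) : R) := by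
      rw [← Units.val_pow_eq_pow_val, inv_pow, hval]
    have hAeq : A = A₀ ^ n := by
      apply Subtype.ext
      rw [hA₀pow n, hvalR, hvalRinv]
      exact hA
    refine ⟨b₀ ^ n, ?_, ?_, ?_⟩
    · rw [Units.val_pow_eq_pow_val, ← pow_mul, mul_comm, pow_mul, hb₀q, one_pow]
    · rw [Units.val_pow_eq_pow_val, map_pow, hb₀α, hα, ← map_pow, hvalR]
    · have hmap : ρ A = M₀ ^ n := by rw [hAeq, map_pow, hM₀]
      rw [hmap]
      have h1 : ((M₀ ^ n : GL (Fin 2) S) : Matrix (Fin 2) (Fin 2) S) = X ^ n :=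
        Units.val_pow_eq_pow_val _ _
      rw [h1, conj_pow_units Y X _ hconj n, Matrix.diagonal_pow]
      have hv : (![(b₀ : S), ((b₀⁻¹ : Sˣ) : S)] ^ n)
          = ![(((b₀ ^ n : Sˣ)) : S), (((b₀ ^ n)⁻¹ : Sˣ) : S)] := by
        funext i
        fin_cases i <;> simp [Pi.pow_apply, inv_pow]
      rw [hv]
end
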